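/- Fix integers N ≥ 1 and T ≥ 1 with N·T ≥ 3, and a learning rate η > 0. Let f_1,…,f_T : {1,…,N} → [0,1] be fixed loss functions, and let y_1,…,y_T be independent random variables, each uniformly distributed on {1,…,N}. Run the MW² recursion with mixing parameter γ = 1/T: w_1(x) = 1 for all x; W_t = Σ_x w_t(x); q_t(x) = w_t(x)/W_t; and w_{t+1}(x) = w_t(x)·exp(−η·N·f_t(x)·𝟙[x = y_t]) + (γ/N)·W_t. Then for any rounds t0 ≤ t1 with t1 − t0 + 1 ≤ T: E[ Σ_{t=t0}^{t1} Σ_{x=1}^{N} q_t(x)·f_t(x) ] − min_{x∈{1,…,N}} Σ_{t=t0}^{t1} f_t(x) ≤ (4·log(N·T))/η + η·N·T, where the expectation is over the random draws y_1,…,y_T (the weights w_t and distributions q_t are random, determined by y_1,…,y_{t−1}). -/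

import Mathlib

open Finset

private lemma exp_neg_le_quad (a : ℝ) (ha : 0 ≤ a) : Real.exp (-a) ≤ 1 - a + a ^ 2 := by
  have h1 : 1 + a ≤ Real.exp a := by linarith [Real.add_one_le_exp a]
  have h2 : 0 < Real.exp (-a) := Real.exp_pos _
  have h3 : Real.exp (-a) * Real.exp a = 1 := by rw [← Real.exp_add]; simp
  nlinarith [mul_le_mul_of_nonneg_left h1 h2.le, sq_nonneg a, sq_nonneg (a - 1), mul_nonneg ha ha]

private lemma sum_eval_coord {N T : ℕ} (k : Fin T)
    (F : (Fin T → Fin N) → Fin N → ℝ)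
    (hF : ∀ y z x, F (Function.update y k z) x = F y x) :
    (N : ℝ) * ∑ y : Fin T → Fin N, F y (y k) = ∑ y : Fin T → Fin N, ∑ x, F y x := by
  have hφ : Function.Involutive
      (fun p : (Fin T → Fin N) × Fin N => (Function.update p.1 k p.2, p.1 k)) := by
    intro p
    simp [Function.update_idem, Function.update_eq_self]
  have hsum := Equiv.sum_comp (hφ.toPerm _) (fun p : (Fin T → Fin N) × Fin N => F p.1 p.2)
  simp only [Function.Involutive.coe_toPerm] at hsum
  calc (N : ℝ) * ∑ y : Fin T → Fin N, F y (y k)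
      = ∑ p : (Fin T → Fin N) × Fin N, F p.1 (p.1 k) := by
        rw [Fintype.sum_prod_type]
        simp [Finset.sum_const, card_univ]
        rw [Finset.mul_sum]
    _ = ∑ p : (Fin T → Fin N) × Fin N, F p.1 p.2 := by
        rw [← hsum]
        exact Finset.sum_congr rfl (fun p _ => (hF _ _ _).symm)
    _ = ∑ y : Fin T → Fin N, ∑ x, F y x := by rw [Fintype.sum_prod_type]

private lemma telescope_Icc (t0 t1 : ℕ) (h : t0 ≤ t1) (g : ℕ → ℝ) :
    ∑ t ∈ Icc t0 t1, (g (t + 1) - g t) = g (t1 + 1) - g t0 := by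
  rw [← Finset.Ico_add_one_right_eq_Icc, Finset.sum_Ico_eq_sum_range]
  have h2 := Finset.sum_range_sub (fun i => g (t0 + i)) (t1 + 1 - t0)
  simp only [Nat.add_zero] at h2
  have h3 : t0 + (t1 + 1 - t0) = t1 + 1 := by omega
  rw [h3] at h2
  rw [← h2]
  exact Finset.sum_congr rfl (fun i _ => by rw [Nat.add_assoc])

set_option maxHeartbeats 2000000 in
theorem mw2_expected_regret
    (N T : ℕ) (hN : 1 ≤ N) (hT : 1 ≤ T) (hNT : 3 ≤ N * T)
    (η : ℝ) (hη : 0 < η)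
    (f : ℕ → Fin N → ℝ) (hf : ∀ t x, f t x ∈ Set.Icc (0 : ℝ) 1)
    (w : (Fin T → Fin N) → ℕ → Fin N → ℝ)
    (hw1 : ∀ y x, w y 1 x = 1)
    (hwrec : ∀ y t, ∀ h1 : 1 ≤ t, ∀ h2 : t ≤ T, ∀ x,
      w y (t + 1) x
        = w y t x *
            Real.exp (-(η * (N : ℝ) * f t x *
              (if x = y ⟨t - 1, by omega⟩ then 1 else 0)))
          + ((1 / (T : ℝ)) / (N : ℝ)) * ∑ z, w y t z)
    (q : (Fin T → Fin N) → ℕ → Fin N → ℝ)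
    (hq : ∀ y t x, q y t x = w y t x / ∑ z, w y t z)
    (t0 t1 : ℕ) (ht0 : 1 ≤ t0) (ht01 : t0 ≤ t1) (ht1 : t1 ≤ T)
    (hlen : t1 - t0 + 1 ≤ T) :
    (∑ y : Fin T → Fin N, ∑ t ∈ Icc t0 t1, ∑ x, q y t x * f t x) / (N : ℝ) ^ T
      - (univ.inf' (univ_nonempty_iff.mpr ⟨⟨0, hN⟩⟩)
          fun x => ∑ t ∈ Icc t0 t1, f t x)
    ≤ 4 * Real.log ((N : ℝ) * (T : ℝ)) / η + η * (N : ℝ) * (T : ℝ) := by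
  have hNe : Nonempty (Fin N) := ⟨⟨0, hN⟩⟩
  have hN0 : (0:ℝ) < N := by exact_mod_cast hN
  have hT0 : (0:ℝ) < T := by exact_mod_cast hT
  have hNT0 : (3:ℝ) ≤ (N:ℝ) * T := by exact_mod_cast hNT
  set γ : ℝ := 1 / (T:ℝ) with hγdef
  have hγ0 : 0 < γ := by positivity
  have hγ1 : γ ≤ 1 := by rw [hγdef, div_le_one hT0]; exact_mod_cast hT
  -- positivity of weights
  have hwpos : ∀ (y : Fin T → Fin N) (t : ℕ), 1 ≤ t → t ≤ T + 1 → ∀ x, 0 < w y t x := by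
    intro y t ht'
    induction t, ht' using Nat.le_induction with
    | base => intro _ x; rw [hw1]; norm_num
    | succ t ht ih =>
      intro ht2 x
      have htT : t ≤ T := by omega
      have h1 : ∀ z, 0 < w y t z := ih (by omega)
      have hsum : 0 < ∑ z, w y t z := Finset.sum_pos (fun z _ => h1 z) univ_nonempty
      rw [hwrec y t ht htT x]
      exact add_pos (mul_pos (h1 x) (Real.exp_pos _))
        (mul_pos (div_pos (by positivity) hN0) hsum)
  have hWpos : ∀ (y : Fin T → Fin N) (t : ℕ), 1 ≤ t → t ≤ T + 1 → 0 < ∑ z, w y t z :=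
    fun y t h1 h2 => Finset.sum_pos (fun z _ => hwpos y t h1 h2 z) univ_nonempty
  -- dependence: w y t depends only on coordinates s with s + 1 < t
  have hdep : ∀ (t : ℕ), 1 ≤ t → t ≤ T + 1 → ∀ (y y' : Fin T → Fin N),
      (∀ s : Fin T, (s : ℕ) + 1 < t → y s = y' s) → ∀ x, w y t x = w y' t x := by
    intro t ht'
    induction t, ht' using Nat.le_induction with
    | base => intro _ y y' _ x; rw [hw1, hw1]
    | succ t ht ih =>
      intro ht2 y y' hagree x
      have htT : t ≤ T := by omega
      have hweq : ∀ z, w y t z = w y' t z :=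
        ih (by omega) y y' (fun s hs => hagree s (by omega))
      have hyk : y ⟨t - 1, by omega⟩ = y' ⟨t - 1, by omega⟩ :=
        hagree ⟨t - 1, by omega⟩ (by simp; omega)
      rw [hwrec y t ht htT x, hwrec y' t ht htT x, hweq x, hyk,
        Finset.sum_congr rfl (fun z _ => hweq z)]
  -- recursion for total weight
  have hWrec : ∀ (y : Fin T → Fin N) (t : ℕ) (h1 : 1 ≤ t) (h2 : t ≤ T),
      ∑ z, w y (t + 1) z
        = (1 + γ) * (∑ z, w y t z)
          - w y t (y ⟨t - 1, by omega⟩) *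
              (1 - Real.exp (-(η * (N:ℝ) * f t (y ⟨t - 1, by omega⟩)))) := by
    intro y t h1 h2
    have hk : t - 1 < T := by omega
    calc ∑ z, w y (t + 1) z
        = ∑ z, (w y t z * Real.exp (-(η * (N:ℝ) * f t z *
              (if z = y ⟨t - 1, hk⟩ then 1 else 0)))
            + ((1 / (T:ℝ)) / (N:ℝ)) * ∑ z', w y t z') :=
          Finset.sum_congr rfl (fun z _ => hwrec y t h1 h2 z)
      _ = ∑ z, (w y t z + (if z = y ⟨t - 1, hk⟩ then
              w y t z * Real.exp (-(η * (N:ℝ) * f t z)) - w y t z else 0))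
            + ∑ z : Fin N, ((1 / (T:ℝ)) / (N:ℝ)) * ∑ z', w y t z' := by
          rw [← Finset.sum_add_distrib]
          refine Finset.sum_congr rfl (fun z _ => ?_)
          split_ifs with h
          · simp
          · simp
      _ = (1 + γ) * (∑ z, w y t z)
          - w y t (y ⟨t - 1, by omega⟩) *
              (1 - Real.exp (-(η * (N:ℝ) * f t (y ⟨t - 1, by omega⟩)))) := by
          rw [Finset.sum_add_distrib, Finset.sum_ite_eq' univ (y ⟨t - 1, hk⟩)]
          simp [Finset.sum_const, card_univ]
          have hNne : (N:ℝ) ≠ 0 := ne_of_gt hN0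
          have hTne : (T:ℝ) ≠ 0 := ne_of_gt hT0
          have hc : (N:ℝ) * ((T:ℝ)⁻¹ / (N:ℝ) * ∑ x, w y t x) = γ * ∑ x, w y t x := by
            rw [hγdef]; field_simp
          rw [hc]
          ring
  -- per-round analysis
  have hkfP : ∀ t : ℕ, (t - 1) % T < T := fun t => Nat.mod_lt _ (by omega)
  set kf : ℕ → Fin T := fun t => ⟨(t - 1) % T, hkfP t⟩ with hkf
  have hkt : ∀ (t : ℕ), 1 ≤ t → t ≤ T → ∀ (h : t - 1 < T), kf t = ⟨t - 1, h⟩ := by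
    intro t h1 h2 h
    apply Fin.ext
    show (t - 1) % T = t - 1
    exact Nat.mod_eq_of_lt h
  -- upper per-round step
  have hstep_up : ∀ (y : Fin T → Fin N) (t : ℕ), 1 ≤ t → t ≤ T →
      Real.log (∑ z, w y (t + 1) z) - Real.log (∑ z, w y t z)
        ≤ γ - η * N * (q y t (y (kf t)) * f t (y (kf t)))
          + η^2 * N^2 * (q y t (y (kf t)) * f t (y (kf t))^2) := by
    intro y t h1 h2
    rw [hkt t h1 h2 (by omega)]
    set c : Fin N := y ⟨t - 1, by omega⟩ with hc
    have hWtpos : 0 < ∑ z, w y t z := hWpos y t h1 (by omega)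
    have hupos : 0 < w y t c := hwpos y t h1 (by omega) c
    have huW : w y t c ≤ ∑ z, w y t z :=
      Finset.single_le_sum (fun z _ => (hwpos y t h1 (by omega) z).le) (mem_univ c)
    have hf0 := (hf t c).1
    have hf1 := (hf t c).2
    set a := η * (N:ℝ) * f t c with ha
    have ha0 : 0 ≤ a := by positivity
    have hqv_eq : q y t c = w y t c / ∑ z, w y t z := hq y t c
    have hqv0 : 0 < q y t c := by rw [hqv_eq]; positivity
    have hqv1 : q y t c ≤ 1 := by
      rw [hqv_eq]; exact div_le_one_of_le₀ huW hWtpos.le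
    have hE0 : 0 < Real.exp (-a) := Real.exp_pos _
    have hE1 : Real.exp (-a) ≤ 1 := by
      calc Real.exp (-a) ≤ Real.exp 0 := Real.exp_le_exp.mpr (by linarith)
        _ = 1 := Real.exp_zero
    have hR : ∑ z, w y (t + 1) z
        = (∑ z, w y t z) * (1 + γ - q y t c * (1 - Real.exp (-a))) := by
      rw [hWrec y t h1 h2, hqv_eq]
      field_simp
      rfl
    have hRpos : 0 < 1 + γ - q y t c * (1 - Real.exp (-a)) := by nlinarith
    have hlog : Real.log (∑ z, w y (t + 1) z)
        = Real.log (∑ z, w y t z) + Real.log (1 + γ - q y t c * (1 - Real.exp (-a))) := by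
      rw [hR, Real.log_mul (ne_of_gt hWtpos) (ne_of_gt hRpos)]
    have hlogle : Real.log (1 + γ - q y t c * (1 - Real.exp (-a)))
        ≤ γ - q y t c * (1 - Real.exp (-a)) := by
      have := Real.log_le_sub_one_of_pos hRpos
      linarith
    have hquad : Real.exp (-a) ≤ 1 - a + a ^ 2 := exp_neg_le_quad a ha0
    have hmain : q y t c * a - q y t c * a ^ 2 ≤ q y t c * (1 - Real.exp (-a)) := by nlinarith
    have e1 : q y t c * a = η * N * (q y t c * f t c) := by rw [ha]; ring
    have e2 : q y t c * a ^ 2 = η^2 * N^2 * (q y t c * f t c ^ 2) := by rw [ha]; ring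
    rw [hlog]
    linarith
  -- lower per-round step
  have hstep_lo : ∀ (y : Fin T → Fin N) (t : ℕ), 1 ≤ t → t ≤ T → ∀ x : Fin N,
      Real.log (w y t x) - η * N * (f t x * (if x = y (kf t) then 1 else 0))
        ≤ Real.log (w y (t + 1) x) := by
    intro y t h1 h2 x
    rw [hkt t h1 h2 (by omega)]
    have hwx : 0 < w y t x := hwpos y t h1 (by omega) x
    have hWt : 0 < ∑ z, w y t z := hWpos y t h1 (by omega)
    set c := -(η * (N:ℝ) * f t x * (if x = y ⟨t - 1, by omega⟩ then 1 else 0)) with hcdef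
    have hle : w y t x * Real.exp c ≤ w y (t + 1) x := by
      rw [hwrec y t h1 h2 x]
      have hpos : 0 ≤ γ / (N:ℝ) * ∑ z, w y t z :=
        (mul_pos (div_pos hγ0 hN0) hWt).le
      linarith
    have hlogle := Real.log_le_log (by positivity) hle
    rw [Real.log_mul (ne_of_gt hwx) (ne_of_gt (Real.exp_pos _)), Real.log_exp] at hlogle
    rw [hcdef] at hlogle
    linarith
  -- upper bound on weight growth
  have hWup : ∀ (y : Fin T → Fin N) (t : ℕ), 1 ≤ t → t ≤ T →
      ∑ z, w y (t + 1) z ≤ (1 + γ) * ∑ z, w y t z := by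
    intro y t h1 h2
    rw [hWrec y t h1 h2]
    have hwx : 0 < w y t (y ⟨t - 1, by omega⟩) := hwpos y t h1 (by omega) _
    have hE1 : Real.exp (-(η * (N:ℝ) * f t (y ⟨t - 1, by omega⟩))) ≤ 1 := by
      have h0 : 0 ≤ η * (N:ℝ) * f t (y ⟨t - 1, by omega⟩) := by
        have := (hf t (y ⟨t - 1, by omega⟩)).1
        positivity
      calc Real.exp _ ≤ Real.exp 0 := Real.exp_le_exp.mpr (by linarith)
        _ = 1 := Real.exp_zero
    nlinarith
  -- initial-weight lower bound
  have hinit : ∀ (y : Fin T → Fin N) (x : Fin N),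
      γ / ((N:ℝ) * (1 + γ)) * ∑ z, w y t0 z ≤ w y t0 x := by
    intro y x
    rcases eq_or_lt_of_le ht0 with h | h
    · -- t0 = 1
      have h1 : t0 = 1 := h.symm
      subst h1
      rw [hw1]
      have hsum : ∑ z, w y 1 z = (N : ℝ) := by
        simp [hw1]
      rw [hsum]
      have : γ / ((N:ℝ) * (1 + γ)) * (N:ℝ) = γ / (1 + γ) := by
        field_simp
      rw [this]
      rw [div_le_one (by positivity)]
      linarith
    · -- t0 ≥ 2
      obtain ⟨s, rfl⟩ : ∃ s, t0 = s + 1 := ⟨t0 - 1, by omega⟩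
      have hs1 : 1 ≤ s := by omega
      have hsT : s ≤ T := by omega
      have hWs : 0 < ∑ z, w y s z := hWpos y s hs1 (by omega)
      have hlow : γ / (N:ℝ) * ∑ z, w y s z ≤ w y (s + 1) x := by
        rw [hwrec y s hs1 hsT x]
        have : 0 ≤ w y s x * Real.exp (-(η * (N:ℝ) * f s x *
            (if x = y ⟨s - 1, by omega⟩ then 1 else 0))) :=
          (mul_pos (hwpos y s hs1 (by omega) x) (Real.exp_pos _)).le
        linarith
      have hWm := hWup y s hs1 hsT
      have hkey : γ / ((N:ℝ) * (1 + γ)) * ((1 + γ) * ∑ z, w y s z)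
          = γ / (N:ℝ) * ∑ z, w y s z := by
        field_simp
      calc γ / ((N:ℝ) * (1 + γ)) * ∑ z, w y (s + 1) z
          ≤ γ / ((N:ℝ) * (1 + γ)) * ((1 + γ) * ∑ z, w y s z) :=
            mul_le_mul_of_nonneg_left hWm (by positivity)
        _ = γ / (N:ℝ) * ∑ z, w y s z := hkey
        _ ≤ w y (s + 1) x := hlow
  -- telescoped bounds
  have hup : ∀ y : Fin T → Fin N,
      Real.log (∑ z, w y (t1 + 1) z) - Real.log (∑ z, w y t0 z)
        ≤ ∑ t ∈ Icc t0 t1, (γ - η * N * (q y t (y (kf t)) * f t (y (kf t)))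
            + η^2 * N^2 * (q y t (y (kf t)) * f t (y (kf t))^2)) := by
    intro y
    have htel : ∑ t ∈ Icc t0 t1,
        (Real.log (∑ z, w y (t + 1) z) - Real.log (∑ z, w y t z))
        = Real.log (∑ z, w y (t1 + 1) z) - Real.log (∑ z, w y t0 z) :=
      telescope_Icc t0 t1 ht01 (fun t => Real.log (∑ z, w y t z))
    rw [← htel]
    refine Finset.sum_le_sum (fun t ht => ?_)
    rw [Finset.mem_Icc] at ht
    exact hstep_up y t (by omega) (by omega)
  obtain ⟨xs, -, hxs⟩ := Finset.exists_mem_eq_inf'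
    (univ_nonempty_iff.mpr ⟨(⟨0, hN⟩ : Fin N)⟩) (fun x => ∑ t ∈ Icc t0 t1, f t x)
  have hlo : ∀ y : Fin T → Fin N,
      Real.log (w y t0 xs) - ∑ t ∈ Icc t0 t1,
          η * N * (f t xs * (if xs = y (kf t) then 1 else 0))
        ≤ Real.log (w y (t1 + 1) xs) := by
    intro y
    have htel : ∑ t ∈ Icc t0 t1,
        (Real.log (w y (t + 1) xs) - Real.log (w y t xs))
        = Real.log (w y (t1 + 1) xs) - Real.log (w y t0 xs) :=
      telescope_Icc t0 t1 ht01 (fun t => Real.log (w y t xs))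
    have hsum : ∑ t ∈ Icc t0 t1,
        (-(η * N * (f t xs * (if xs = y (kf t) then 1 else 0))))
        ≤ ∑ t ∈ Icc t0 t1,
          (Real.log (w y (t + 1) xs) - Real.log (w y t xs)) := by
      refine Finset.sum_le_sum (fun t ht => ?_)
      rw [Finset.mem_Icc] at ht
      have := hstep_lo y t (by omega) (by omega) xs
      linarith
    rw [htel, Finset.sum_neg_distrib] at hsum
    linarith
  have hcmp : ∀ y : Fin T → Fin N,
      Real.log (w y (t1 + 1) xs) ≤ Real.log (∑ z, w y (t1 + 1) z) := by
    intro y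
    apply Real.log_le_log (hwpos y (t1 + 1) (by omega) (by omega) xs)
    exact Finset.single_le_sum (fun z _ => (hwpos y (t1 + 1) (by omega) (by omega) z).le)
      (mem_univ xs)
  have hinitlog : ∀ y : Fin T → Fin N,
      Real.log (γ / ((N:ℝ) * (1 + γ))) + Real.log (∑ z, w y t0 z)
        ≤ Real.log (w y t0 xs) := by
    intro y
    have h1 := hinit y xs
    have h2 : 0 < γ / ((N:ℝ) * (1 + γ)) := by positivity
    have h3 : 0 < ∑ z, w y t0 z := hWpos y t0 ht0 (by omega)
    calc Real.log (γ / ((N:ℝ) * (1 + γ))) + Real.log (∑ z, w y t0 z)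
        = Real.log (γ / ((N:ℝ) * (1 + γ)) * ∑ z, w y t0 z) :=
          (Real.log_mul (ne_of_gt h2) (ne_of_gt h3)).symm
      _ ≤ Real.log (w y t0 xs) := Real.log_le_log (by positivity) h1
  have hmaster : ∀ y : Fin T → Fin N,
      Real.log (γ / ((N:ℝ) * (1 + γ)))
          - ∑ t ∈ Icc t0 t1, η * N * (f t xs * (if xs = y (kf t) then 1 else 0))
        ≤ ∑ t ∈ Icc t0 t1, (γ - η * N * (q y t (y (kf t)) * f t (y (kf t)))
            + η^2 * N^2 * (q y t (y (kf t)) * f t (y (kf t))^2)) := by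
    intro y
    linarith [hup y, hlo y, hcmp y, hinitlog y]
  -- expectation identities
  have hinv : ∀ (t : ℕ), 1 ≤ t → t ≤ T → ∀ (y : Fin T → Fin N) (z : Fin N) (x : Fin N),
      q (Function.update y (kf t) z) t x = q y t x := by
    intro t h1 h2 y z x
    have hwu : ∀ x' : Fin N, w (Function.update y (kf t) z) t x' = w y t x' := by
      intro x'
      refine hdep t h1 (by omega) _ y (fun s hs => ?_) x'
      refine Function.update_of_ne (Fin.ne_of_val_ne ?_) z y
      have : (kf t : ℕ) = t - 1 := by rw [hkt t h1 h2 (by omega)]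
      omega
    rw [hq, hq, hwu x, Finset.sum_congr rfl (fun z' _ => hwu z')]
  have heqG : ∀ (g : Fin N → ℝ) (t : ℕ), 1 ≤ t → t ≤ T →
      (N : ℝ) * ∑ y : Fin T → Fin N, q y t (y (kf t)) * g (y (kf t))
        = ∑ y : Fin T → Fin N, ∑ x, q y t x * g x := by
    intro g t h1 h2
    exact sum_eval_coord (kf t) (fun y x => q y t x * g x)
      (fun y z x => by
        show q (Function.update y (kf t) z) t x * g x = q y t x * g x
        rw [hinv t h1 h2 y z x])
  set P : ℝ := (N : ℝ) ^ T with hP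
  have hP0 : 0 < P := by positivity
  have hcard : ∑ _y : Fin T → Fin N, (1 : ℝ) = P := by
    rw [Finset.sum_const, card_univ]
    simp [hP]
  have heqI : ∀ (t : ℕ), 1 ≤ t → t ≤ T →
      (N : ℝ) * ∑ y : Fin T → Fin N, f t xs * (if xs = y (kf t) then 1 else 0)
        = P * f t xs := by
    intro t h1 h2
    rw [sum_eval_coord (kf t) (fun _ x => f t xs * (if xs = x then 1 else 0))
      (fun _ _ _ => rfl)]
    have hin : ∀ y : Fin T → Fin N,
        ∑ x : Fin N, f t xs * (if xs = x then 1 else 0) = f t xs := by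
      intro y
      rw [← Finset.mul_sum]
      simp
    rw [Finset.sum_congr rfl (fun y _ => hin y), ← hcard, Finset.sum_mul]
    simp
  -- bounds on the q-sums
  have hq01 : ∀ (y : Fin T → Fin N) (t : ℕ), 1 ≤ t → t ≤ T → ∀ x : Fin N,
      0 ≤ q y t x := by
    intro y t h1 h2 x
    rw [hq]
    exact le_of_lt (div_pos (hwpos y t h1 (by omega) x) (hWpos y t h1 (by omega)))
  have hqsum1 : ∀ (y : Fin T → Fin N) (t : ℕ), 1 ≤ t → t ≤ T →
      ∑ x, q y t x = 1 := by
    intro y t h1 h2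
    have hWt := hWpos y t h1 (by omega)
    rw [Finset.sum_congr rfl (fun x _ => hq y t x), ← Finset.sum_div]
    exact div_self (ne_of_gt hWt)
  have hqf2 : ∀ (t : ℕ), 1 ≤ t → t ≤ T →
      ∑ y : Fin T → Fin N, ∑ x, q y t x * f t x ^ 2 ≤ P := by
    intro t h1 h2
    rw [← hcard]
    refine Finset.sum_le_sum (fun y _ => ?_)
    calc ∑ x, q y t x * f t x ^ 2 ≤ ∑ x, q y t x := by
          refine Finset.sum_le_sum (fun x _ => ?_)
          have h0 := (hf t x).1
          have hle := (hf t x).2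
          have hf2 : f t x ^ 2 ≤ 1 := by nlinarith
          exact mul_le_of_le_one_right (hq01 y t h1 h2 x) hf2
      _ = 1 := hqsum1 y t h1 h2
  -- summed master inequality
  set C : ℝ := Real.log (γ / ((N:ℝ) * (1 + γ))) with hC
  set m : ℕ := (Icc t0 t1).card with hm
  have hmval : m = t1 + 1 - t0 := by rw [hm, Nat.card_Icc]
  have hmT : (m : ℝ) ≤ (T : ℝ) := by
    have : m ≤ T := by omega
    exact_mod_cast this
  have hmsum := Finset.sum_le_sum (fun y (_ : y ∈ (univ : Finset (Fin T → Fin N))) => hmaster y)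
  -- compute LHS of hmsum
  have hL1 : ∑ y : Fin T → Fin N, (C - ∑ t ∈ Icc t0 t1,
      η * N * (f t xs * (if xs = y (kf t) then 1 else 0)))
      = P * C - η * P * ∑ t ∈ Icc t0 t1, f t xs := by
    rw [Finset.sum_sub_distrib]
    congr 1
    · rw [← hcard, Finset.sum_mul]; simp
    · rw [Finset.sum_comm]
      have hper : ∀ t ∈ Icc t0 t1,
          ∑ y : Fin T → Fin N, η * N * (f t xs * (if xs = y (kf t) then 1 else 0))
            = η * (P * f t xs) := by
        intro t ht
        rw [Finset.mem_Icc] at ht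
        rw [← Finset.mul_sum]
        rw [show (η * (N:ℝ)) * (∑ y : Fin T → Fin N, f t xs * (if xs = y (kf t) then 1 else 0))
          = η * ((N:ℝ) * ∑ y : Fin T → Fin N, f t xs * (if xs = y (kf t) then 1 else 0)) from by ring]
        rw [heqI t (by omega) (by omega)]
      rw [Finset.sum_congr rfl hper, ← Finset.mul_sum, ← Finset.mul_sum]
      ring
  -- compute RHS of hmsum
  have hR1 : ∑ y : Fin T → Fin N, ∑ t ∈ Icc t0 t1,
      (γ - η * N * (q y t (y (kf t)) * f t (y (kf t)))
        + η^2 * N^2 * (q y t (y (kf t)) * f t (y (kf t))^2))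
      ≤ P * ((m:ℝ) * γ)
        - η * (∑ y : Fin T → Fin N, ∑ t ∈ Icc t0 t1, ∑ x, q y t x * f t x)
        + η^2 * N * (m:ℝ) * P := by
    have hsplit : ∀ y : Fin T → Fin N, ∑ t ∈ Icc t0 t1,
        (γ - η * N * (q y t (y (kf t)) * f t (y (kf t)))
          + η^2 * N^2 * (q y t (y (kf t)) * f t (y (kf t))^2))
        = (m:ℝ) * γ
          - ∑ t ∈ Icc t0 t1, η * N * (q y t (y (kf t)) * f t (y (kf t)))
          + ∑ t ∈ Icc t0 t1, η^2 * N^2 * (q y t (y (kf t)) * f t (y (kf t))^2) := by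
      intro y
      rw [Finset.sum_add_distrib, Finset.sum_sub_distrib, Finset.sum_const, hm]
      simp [nsmul_eq_mul]
    rw [Finset.sum_congr rfl (fun y _ => hsplit y), Finset.sum_add_distrib,
      Finset.sum_sub_distrib]
    have e1 : ∑ _y : Fin T → Fin N, ((m:ℝ) * γ) = P * ((m:ℝ) * γ) := by
      rw [← hcard, Finset.sum_mul]; simp
    have e2 : ∑ y : Fin T → Fin N, ∑ t ∈ Icc t0 t1,
        η * N * (q y t (y (kf t)) * f t (y (kf t)))
        = η * ∑ y : Fin T → Fin N, ∑ t ∈ Icc t0 t1, ∑ x, q y t x * f t x := by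
      rw [Finset.sum_comm]
      have hper : ∀ t ∈ Icc t0 t1,
          ∑ y : Fin T → Fin N, η * N * (q y t (y (kf t)) * f t (y (kf t)))
            = η * ∑ y : Fin T → Fin N, ∑ x, q y t x * f t x := by
        intro t ht
        rw [Finset.mem_Icc] at ht
        rw [← Finset.mul_sum]
        rw [show (η * (N:ℝ)) * (∑ y : Fin T → Fin N, q y t (y (kf t)) * f t (y (kf t)))
          = η * ((N:ℝ) * ∑ y : Fin T → Fin N, q y t (y (kf t)) * f t (y (kf t))) from by ring]
        rw [heqG (f t) t (by omega) (by omega)]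
      rw [Finset.sum_congr rfl hper, ← Finset.mul_sum]
      rw [Finset.sum_comm]
    have e3 : ∑ y : Fin T → Fin N, ∑ t ∈ Icc t0 t1,
        η^2 * N^2 * (q y t (y (kf t)) * f t (y (kf t))^2)
        ≤ η^2 * N * (m:ℝ) * P := by
      rw [Finset.sum_comm]
      have hper : ∀ t ∈ Icc t0 t1,
          ∑ y : Fin T → Fin N, η^2 * N^2 * (q y t (y (kf t)) * f t (y (kf t))^2)
            ≤ η^2 * N * P := by
        intro t ht
        rw [Finset.mem_Icc] at ht
        rw [← Finset.mul_sum]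
        rw [show (η^2 * (N:ℝ)^2) * (∑ y : Fin T → Fin N, q y t (y (kf t)) * f t (y (kf t))^2)
          = (η^2 * (N:ℝ)) * ((N:ℝ) * ∑ y : Fin T → Fin N, q y t (y (kf t)) * f t (y (kf t))^2) from by ring]
        rw [heqG (fun x => f t x ^ 2) t (by omega) (by omega)]
        have := hqf2 t (by omega) (by omega)
        have hc : 0 ≤ η^2 * (N:ℝ) := by positivity
        exact mul_le_mul_of_nonneg_left this hc
      calc ∑ t ∈ Icc t0 t1, ∑ y : Fin T → Fin N,
            η^2 * N^2 * (q y t (y (kf t)) * f t (y (kf t))^2)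
          ≤ ∑ _t ∈ Icc t0 t1, η^2 * N * P := Finset.sum_le_sum hper
        _ = (m:ℝ) * (η^2 * N * P) := by rw [Finset.sum_const, hm, nsmul_eq_mul]
        _ = η^2 * N * (m:ℝ) * P := by ring
    rw [e1, e2]
    linarith
  -- final numeric assembly
  set S : ℝ := ∑ y : Fin T → Fin N, ∑ t ∈ Icc t0 t1, ∑ x, q y t x * f t x with hSdef
  set M : ℝ := ∑ t ∈ Icc t0 t1, f t xs with hMdef
  have key : P * C - η * P * M ≤ P * ((m:ℝ) * γ) - η * S + η^2 * N * (m:ℝ) * P :=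
    le_trans (le_of_eq hL1.symm) (le_trans hmsum hR1)
  have key2 : η * S ≤ P * ((m:ℝ) * γ) - P * C + η * P * M + η^2 * N * (m:ℝ) * P := by
    linarith
  have hSP : η * S / P ≤ (m:ℝ) * γ - C + η * M + η^2 * N * (m:ℝ) := by
    rw [div_le_iff₀ hP0]
    nlinarith [key2]
  have hfin1 : η * (S / P - M) ≤ (m:ℝ) * γ - C + η^2 * N * (m:ℝ) := by
    have : η * (S / P - M) = η * S / P - η * M := by
      rw [mul_sub, mul_div_assoc]
    rw [this]
    linarith
  -- numeric bounds
  set L : ℝ := Real.log ((N:ℝ) * (T:ℝ)) with hLdef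
  have hNTpos : (0:ℝ) < (N:ℝ) * T := by positivity
  have hLval : L = Real.log N + Real.log T :=
    Real.log_mul (ne_of_gt hN0) (ne_of_gt hT0)
  have hL1' : 1 ≤ L := by
    have h9 := Real.exp_one_lt_d9
    have hexp : Real.exp 1 ≤ (N:ℝ) * T := by
      have : (2.7182818286 : ℝ) ≤ 3 := by norm_num
      linarith
    exact (Real.le_log_iff_exp_le hNTpos).mpr hexp
  have hCval : C = Real.log γ - (Real.log N + Real.log (1 + γ)) := by
    rw [hC, Real.log_div (ne_of_gt hγ0) (by positivity),
      Real.log_mul (ne_of_gt hN0) (by positivity)]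
  have hlogγ : Real.log γ = -Real.log T := by
    rw [hγdef, one_div, Real.log_inv]
  have hlog1γ : Real.log (1 + γ) ≤ Real.log 2 :=
    Real.log_le_log (by linarith) (by linarith)
  have hlog2 : Real.log 2 ≤ L := by
    rw [hLdef]
    exact Real.log_le_log (by norm_num) (by linarith)
  have hCb : -C ≤ 2 * L := by
    rw [hCval, hlogγ]
    linarith
  have hmγ1 : (m:ℝ) * γ ≤ 1 := by
    rw [hγdef, mul_one_div, div_le_one hT0]
    exact hmT
  have hm2 : η^2 * N * (m:ℝ) ≤ η^2 * N * (T:ℝ) := by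
    have : (0:ℝ) ≤ η^2 * N := by positivity
    exact mul_le_mul_of_nonneg_left hmT this
  have hfin2 : η * (S / P - M) ≤ 4 * L + η^2 * (N:ℝ) * (T:ℝ) := by
    have : η^2 * N * (T:ℝ) = η^2 * (N:ℝ) * (T:ℝ) := by ring
    linarith
  have heq : η * (4 * L / η + η * (N:ℝ) * (T:ℝ)) = 4 * L + η^2 * (N:ℝ) * (T:ℝ) := by
    field_simp
  have hfinal : S / P - M ≤ 4 * L / η + η * (N:ℝ) * (T:ℝ) :=
    le_of_mul_le_mul_left (by rw [heq]; exact hfin2) hη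
  rw [hxs]
  exact hfinal
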